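/- Let G be an uncertain signed graph and v an articulation point decomposing G into subgraphs G1, …, Gk that pairwise intersect exactly in {v} and whose union is G. Then R_bal(G) = ∏_{i=1}^k R_bal(G_i). -/

import Mathlib

open SimpleGraph Finset

variable {V : Type*}

/-- A signed graph `(G, σ)` (with `σ e = true` meaning the edge `e` is positive)
has no negative cycle: no cycle has an odd number of negative edges. -/
def NoNegCycle (G : SimpleGraph V) (σ : Sym2 V → Bool) : Prop :=
  ∀ (u : V) (w : G.Walk u u), w.IsCycle →
    ¬ Odd ((w.edges.filter fun e => σ e = false).length)

/- The edge set of `G` as a `Finset`. -/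
open scoped Classical in
noncomputable def edgeFS [Fintype V] (G : SimpleGraph V) : Finset (Sym2 V) :=
  Finset.univ.filter (· ∈ G.edgeSet)

/- The balance rate of an uncertain signed graph: the probability, when each edge `e`
exists independently with probability `p e`, that the realized signed graph is balanced
(contains no negative cycle). -/
open scoped Classical in
noncomputable def Rbal [Fintype V] (G : SimpleGraph V) (σ : Sym2 V → Bool)
    (p : Sym2 V → ℝ) : ℝ :=
  ∑ S ∈ (edgeFS G).powerset,
    ((∏ e ∈ S, p e) * ∏ e ∈ edgeFS G \ S, (1 - p e)) *
      (if NoNegCycle (SimpleGraph.fromEdgeSet (↑S : Set (Sym2 V))) σ then 1 else 0)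

/-- The subgraph of `G` induced on a vertex set `A` (kept on the same vertex type). -/
def restrictTo (G : SimpleGraph V) (A : Set V) : SimpleGraph V where
  Adj x y := G.Adj x y ∧ x ∈ A ∧ y ∈ A
  symm := ⟨fun _ _ h => ⟨h.1.symm, h.2.2, h.2.1⟩⟩
  loopless := ⟨fun x h => G.loopless.irrefl x h.1⟩

/-! ### Auxiliary lemmas -/

lemma noNegCycle_bot (σ : Sym2 V → Bool) : NoNegCycle (⊥ : SimpleGraph V) σ := by
  intro u w hw
  cases w with
  | nil => exact absurd rfl hw.ne_nil
  | cons h _ => exact h.elim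

lemma mem_edgeFS [Fintype V] {G : SimpleGraph V} {e : Sym2 V} :
    e ∈ edgeFS G ↔ e ∈ G.edgeSet := by
  classical
  simp [edgeFS]

lemma Rbal_eq_one [Fintype V] {G : SimpleGraph V} (σ : Sym2 V → Bool) (p : Sym2 V → ℝ)
    (h : ∀ x y, ¬ G.Adj x y) : Rbal G σ p = 1 := by
  have hE : edgeFS G = ∅ := by
    ext e
    simp only [mem_edgeFS, Finset.notMem_empty, iff_false]
    intro he
    induction e with
    | h x y => exact h x y ((SimpleGraph.mem_edgeSet G).mp he)
  simp [Rbal, hE, noNegCycle_bot, SimpleGraph.fromEdgeSet_empty]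

/-- Key combinatorial lemma: a walk whose internal vertices avoid `v`, and whose edges
all lie in `S₁ ∪ S₂` (with `S₁`-edges inside `B` and `S₂`-edges inside `C`,
`B ∩ C ⊆ {v}`), has all its edges in `S₁` or all its edges in `S₂`. -/
lemma walk_one_side {G' : SimpleGraph V} {B C : Set V} {v : V}
    (hBC : B ∩ C ⊆ {v}) {S₁ S₂ : Finset (Sym2 V)}
    (h₁ : ∀ e ∈ S₁, ∀ x ∈ e, x ∈ B) (h₂ : ∀ e ∈ S₂, ∀ x ∈ e, x ∈ C) :
    ∀ {a b : V} (w : G'.Walk a b), (∀ e ∈ w.edges, e ∈ S₁ ∨ e ∈ S₂) →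
      v ∉ w.support.tail.dropLast →
      (∀ e ∈ w.edges, e ∈ S₁) ∨ (∀ e ∈ w.edges, e ∈ S₂) := by
  intro a b w
  induction w with
  | nil =>
    intro _ _
    left
    intro e he
    simp at he
  | @cons a c b h w ih =>
    intro hmem hv
    cases w with
    | nil =>
      rcases hmem s(a, c) (by simp) with h1 | h2
      · left; intro e he; simp only [SimpleGraph.Walk.edges_cons,
          SimpleGraph.Walk.edges_nil, List.mem_singleton] at he; subst he; exact h1
      · right; intro e he; simp only [SimpleGraph.Walk.edges_cons,
          SimpleGraph.Walk.edges_nil, List.mem_singleton] at he; subst he; exact h2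
    | @cons c d b h' w'' =>
      have hsupp : (SimpleGraph.Walk.cons h (SimpleGraph.Walk.cons h' w'')).support.tail.dropLast
          = c :: w''.support.dropLast := by
        simp only [SimpleGraph.Walk.support_cons, List.tail_cons]
        exact List.dropLast_cons_of_ne_nil (SimpleGraph.Walk.support_ne_nil _)
      rw [hsupp, List.mem_cons, not_or] at hv
      obtain ⟨hcv, hv'⟩ := hv
      have hmem' : ∀ e ∈ (SimpleGraph.Walk.cons h' w'').edges, e ∈ S₁ ∨ e ∈ S₂ := by
        intro e he
        exact hmem e (by rw [SimpleGraph.Walk.edges_cons]; exact List.mem_cons_of_mem _ he)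
      have hv'' : v ∉ (SimpleGraph.Walk.cons h' w'').support.tail.dropLast := by
        simpa only [SimpleGraph.Walk.support_cons, List.tail_cons] using hv'
      have hcd : s(c, d) ∈ (SimpleGraph.Walk.cons h' w'').edges := by simp
      have hcv' : c ≠ v := fun hh => hcv hh.symm
      rcases ih hmem' hv'' with H | H
      · rcases hmem s(a, c) (by simp) with h1 | h2
        · left
          intro e he
          rw [SimpleGraph.Walk.edges_cons] at he
          rcases List.mem_cons.mp he with rfl | he'
          · exact h1
          · exact H e he'
        · exfalso
          have hcC : c ∈ C := h₂ _ h2 c (Sym2.mem_mk_right a c)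
          have hcB : c ∈ B := h₁ _ (H _ hcd) c (Sym2.mem_mk_left c d)
          exact hcv' (hBC ⟨hcB, hcC⟩)
      · rcases hmem s(a, c) (by simp) with h1 | h2
        · exfalso
          have hcB : c ∈ B := h₁ _ h1 c (Sym2.mem_mk_right a c)
          have hcC : c ∈ C := h₂ _ (H _ hcd) c (Sym2.mem_mk_left c d)
          exact hcv' (hBC ⟨hcB, hcC⟩)
        · right
          intro e he
          rw [SimpleGraph.Walk.edges_cons] at he
          rcases List.mem_cons.mp he with rfl | he'
          · exact h2
          · exact H e he'

lemma cycle_one_side {G' : SimpleGraph V} {B C : Set V} {v : V}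
    (hBC : B ∩ C ⊆ {v}) {S₁ S₂ : Finset (Sym2 V)}
    (h₁ : ∀ e ∈ S₁, ∀ x ∈ e, x ∈ B) (h₂ : ∀ e ∈ S₂, ∀ x ∈ e, x ∈ C)
    {u : V} (w : G'.Walk u u) (hc : w.IsCycle)
    (hmem : ∀ e ∈ w.edges, e ∈ S₁ ∨ e ∈ S₂) :
    (∀ e ∈ w.edges, e ∈ S₁) ∨ (∀ e ∈ w.edges, e ∈ S₂) := by
  classical
  by_cases hv : v ∈ w.support
  · have hc' := hc.rotate hv
    have hperm : List.Perm (w.rotate v hv).edges w.edges := (w.rotate_edges v hv).perm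
    have hmem' : ∀ e ∈ (w.rotate v hv).edges, e ∈ S₁ ∨ e ∈ S₂ :=
      fun e he => hmem e (hperm.mem_iff.mp he)
    have hne : (w.rotate v hv).support.tail ≠ [] := by
      intro hnil
      have h5 : (w.rotate v hv).support.tail.length = 0 := by rw [hnil]; rfl
      rw [List.length_tail, (w.rotate v hv).length_support] at h5
      have h4 : (w.rotate v hv).length = 0 := by omega
      exact hc'.not_nil (SimpleGraph.Walk.nil_iff_length_eq.mpr h4)
    have hlast : (w.rotate v hv).support.tail.getLast hne = v := by
      rw [List.getLast_tail]
      exact (w.rotate v hv).getLast_support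
    have hnodup : (w.rotate v hv).support.tail.Nodup := hc'.support_nodup
    have hnv : v ∉ (w.rotate v hv).support.tail.dropLast := by
      intro hmem''
      have heq := List.dropLast_concat_getLast hne
      rw [hlast] at heq
      rw [← heq] at hnodup
      rcases List.nodup_append.mp hnodup with ⟨_, _, hdisj⟩
      exact hdisj v hmem'' v (List.mem_singleton_self v) rfl
    rcases walk_one_side hBC h₁ h₂ (w.rotate v hv) hmem' hnv with H | H
    · left; exact fun e he => H e (hperm.mem_iff.mpr he)
    · right; exact fun e he => H e (hperm.mem_iff.mpr he)
  · have hnv : v ∉ w.support.tail.dropLast := fun hmem'' =>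
      hv (List.tail_subset _ (List.dropLast_subset _ hmem''))
    exact walk_one_side hBC h₁ h₂ w hmem hnv

lemma noNegCycle_of_subset {s t : Finset (Sym2 V)} (hst : s ⊆ t) (σ : Sym2 V → Bool)
    (h : NoNegCycle (SimpleGraph.fromEdgeSet (↑t : Set (Sym2 V))) σ) :
    NoNegCycle (SimpleGraph.fromEdgeSet (↑s : Set (Sym2 V))) σ := by
  intro u w hw
  have hsub : ∀ e ∈ w.edges, e ∈ (SimpleGraph.fromEdgeSet (↑t : Set (Sym2 V))).edgeSet := by
    intro e he
    have h1 := w.edges_subset_edgeSet he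
    rw [SimpleGraph.edgeSet_fromEdgeSet] at h1 ⊢
    exact ⟨by simpa using hst (by simpa using h1.1), h1.2⟩
  have := h u (w.transfer _ hsub) (hw.transfer hsub)
  rwa [SimpleGraph.Walk.edges_transfer] at this

lemma noNegCycle_union_iff [DecidableEq V] {B C : Set V} {v : V} (hBC : B ∩ C ⊆ {v})
    {S₁ S₂ : Finset (Sym2 V)}
    (h₁ : ∀ e ∈ S₁, ∀ x ∈ e, x ∈ B) (h₂ : ∀ e ∈ S₂, ∀ x ∈ e, x ∈ C)
    (σ : Sym2 V → Bool) :
    NoNegCycle (SimpleGraph.fromEdgeSet (↑(S₁ ∪ S₂) : Set (Sym2 V))) σ ↔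
      NoNegCycle (SimpleGraph.fromEdgeSet (↑S₁ : Set (Sym2 V))) σ ∧
        NoNegCycle (SimpleGraph.fromEdgeSet (↑S₂ : Set (Sym2 V))) σ := by
  classical
  constructor
  · intro h
    exact ⟨noNegCycle_of_subset Finset.subset_union_left σ h,
      noNegCycle_of_subset Finset.subset_union_right σ h⟩
  · rintro ⟨hA, hB⟩ u w hw
    have hmem : ∀ e ∈ w.edges, e ∈ S₁ ∨ e ∈ S₂ := by
      intro e he
      have h1 := w.edges_subset_edgeSet he
      rw [SimpleGraph.edgeSet_fromEdgeSet] at h1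
      simpa [Finset.mem_union] using h1.1
    have hndiag : ∀ e ∈ w.edges, ¬ e.IsDiag := by
      intro e he
      have h1 := w.edges_subset_edgeSet he
      rw [SimpleGraph.edgeSet_fromEdgeSet] at h1
      exact h1.2
    rcases cycle_one_side hBC h₁ h₂ w hw hmem with H | H
    · have hsub : ∀ e ∈ w.edges, e ∈ (SimpleGraph.fromEdgeSet (↑S₁ : Set (Sym2 V))).edgeSet := by
        intro e he
        rw [SimpleGraph.edgeSet_fromEdgeSet]
        exact ⟨by simpa using H e he, hndiag e he⟩
      have := hA u (w.transfer _ hsub) (hw.transfer hsub)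
      rwa [SimpleGraph.Walk.edges_transfer] at this
    · have hsub : ∀ e ∈ w.edges, e ∈ (SimpleGraph.fromEdgeSet (↑S₂ : Set (Sym2 V))).edgeSet := by
        intro e he
        rw [SimpleGraph.edgeSet_fromEdgeSet]
        exact ⟨by simpa using H e he, hndiag e he⟩
      have := hB u (w.transfer _ hsub) (hw.transfer hsub)
      rwa [SimpleGraph.Walk.edges_transfer] at this

lemma sum_powerset_union {α : Type*} [DecidableEq α] {s t : Finset α} (h : Disjoint s t)
    (f : Finset α → ℝ) :
    ∑ u ∈ (s ∪ t).powerset, f u = ∑ a ∈ s.powerset, ∑ b ∈ t.powerset, f (a ∪ b) := by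
  rw [← Finset.sum_product']
  refine Finset.sum_nbij' (fun u => (u ∩ s, u ∩ t)) (fun q => q.1 ∪ q.2) ?_ ?_ ?_ ?_ ?_
  · intro u hu
    simp only [Finset.mem_product, Finset.mem_powerset]
    exact ⟨Finset.inter_subset_right, Finset.inter_subset_right⟩
  · intro q hq
    simp only [Finset.mem_product, Finset.mem_powerset] at hq
    exact Finset.mem_powerset.mpr (Finset.union_subset_union hq.1 hq.2)
  · intro u hu
    rw [Finset.mem_powerset] at hu
    show u ∩ s ∪ u ∩ t = u
    rw [← Finset.inter_union_distrib_left]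
    exact Finset.inter_eq_left.mpr hu
  · intro q hq
    simp only [Finset.mem_product, Finset.mem_powerset] at hq
    have e1 : q.2 ∩ s = ∅ := by
      ext e
      simp only [Finset.mem_inter, Finset.notMem_empty, iff_false]
      rintro ⟨he2, hes⟩
      exact Finset.disjoint_left.mp h hes (hq.2 he2)
    have e2 : q.1 ∩ t = ∅ := by
      ext e
      simp only [Finset.mem_inter, Finset.notMem_empty, iff_false]
      rintro ⟨he1, het⟩
      exact Finset.disjoint_left.mp h (hq.1 he1) het
    have h1 : (q.1 ∪ q.2) ∩ s = q.1 := by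
      rw [Finset.union_inter_distrib_right,
        Finset.inter_eq_left.mpr hq.1, e1, Finset.union_empty]
    have h2 : (q.1 ∪ q.2) ∩ t = q.2 := by
      rw [Finset.union_inter_distrib_right,
        Finset.inter_eq_left.mpr hq.2, e2, Finset.empty_union]
    show ((q.1 ∪ q.2) ∩ s, (q.1 ∪ q.2) ∩ t) = q
    rw [h1, h2]
  · intro u hu
    rw [Finset.mem_powerset] at hu
    show f u = f (u ∩ s ∪ u ∩ t)
    rw [← Finset.inter_union_distrib_left, Finset.inter_eq_left.mpr hu]

lemma edgeFS_restrict_mem [Fintype V] {G : SimpleGraph V} {A : Set V} :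
    ∀ e ∈ edgeFS (restrictTo G A), ∀ x ∈ e, x ∈ A := by
  intro e he
  rw [mem_edgeFS] at he
  induction e with
  | h x y =>
    rw [SimpleGraph.mem_edgeSet] at he
    obtain ⟨-, hx, hy⟩ := he
    intro z hz
    rcases Sym2.mem_iff.mp hz with rfl | rfl
    · exact hx
    · exact hy

/-- The binary split lemma. -/
lemma Rbal_mul_of_split [Fintype V] (G : SimpleGraph V) (σ : Sym2 V → Bool) (p : Sym2 V → ℝ)
    (v : V) (B C : Set V) (hBC : B ∩ C ⊆ {v})
    (hedge : ∀ x y, G.Adj x y → (x ∈ B ∧ y ∈ B) ∨ (x ∈ C ∧ y ∈ C)) :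
    Rbal G σ p = Rbal (restrictTo G B) σ p * Rbal (restrictTo G C) σ p := by
  classical
  set E₁ := edgeFS (restrictTo G B) with hE₁
  set E₂ := edgeFS (restrictTo G C) with hE₂
  have hBmem : ∀ e ∈ E₁, ∀ x ∈ e, x ∈ B := edgeFS_restrict_mem
  have hCmem : ∀ e ∈ E₂, ∀ x ∈ e, x ∈ C := edgeFS_restrict_mem
  have hdisj : Disjoint E₁ E₂ := by
    rw [Finset.disjoint_left]
    intro e he1 he2
    have hB := hBmem e he1
    have hC := hCmem e he2
    induction e with
    | h x y =>
      have hx : x = v := hBC ⟨hB x (Sym2.mem_mk_left x y), hC x (Sym2.mem_mk_left x y)⟩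
      have hy : y = v := hBC ⟨hB y (Sym2.mem_mk_right x y), hC y (Sym2.mem_mk_right x y)⟩
      rw [mem_edgeFS, SimpleGraph.mem_edgeSet] at he1
      exact (restrictTo G B).ne_of_adj he1 (hx.trans hy.symm)
  have hE : edgeFS G = E₁ ∪ E₂ := by
    ext e
    rw [Finset.mem_union, mem_edgeFS, hE₁, hE₂, mem_edgeFS, mem_edgeFS]
    induction e with
    | h x y =>
      simp only [SimpleGraph.mem_edgeSet]
      constructor
      · intro hadj
        rcases hedge x y hadj with ⟨hx, hy⟩ | ⟨hx, hy⟩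
        · exact Or.inl ⟨hadj, hx, hy⟩
        · exact Or.inr ⟨hadj, hx, hy⟩
      · rintro (⟨hadj, -⟩ | ⟨hadj, -⟩) <;> exact hadj
  rw [Rbal, Rbal, Rbal, hE, sum_powerset_union hdisj, Finset.sum_mul_sum]
  refine Finset.sum_congr rfl fun S₁ hS₁ => Finset.sum_congr rfl fun S₂ hS₂ => ?_
  rw [Finset.mem_powerset] at hS₁ hS₂
  have hd12 : Disjoint S₁ S₂ := hdisj.mono hS₁ hS₂
  have hw1 : ∏ e ∈ S₁ ∪ S₂, p e = (∏ e ∈ S₁, p e) * ∏ e ∈ S₂, p e := Finset.prod_union hd12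
  have hsd : (E₁ ∪ E₂) \ (S₁ ∪ S₂) = (E₁ \ S₁) ∪ (E₂ \ S₂) := by
    ext e
    simp only [Finset.mem_sdiff, Finset.mem_union]
    constructor
    · rintro ⟨h1 | h1, h2⟩
      · exact Or.inl ⟨h1, fun hh => h2 (Or.inl hh)⟩
      · exact Or.inr ⟨h1, fun hh => h2 (Or.inr hh)⟩
    · rintro (⟨h1, h2⟩ | ⟨h1, h2⟩)
      · exact ⟨Or.inl h1, by
          rintro (hh | hh)
          · exact h2 hh
          · exact Finset.disjoint_left.mp hdisj h1 (hS₂ hh)⟩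
      · exact ⟨Or.inr h1, by
          rintro (hh | hh)
          · exact Finset.disjoint_left.mp hdisj (hS₁ hh) h1
          · exact h2 hh⟩
  have hw2 : ∏ e ∈ (E₁ ∪ E₂) \ (S₁ ∪ S₂), (1 - p e)
      = (∏ e ∈ E₁ \ S₁, (1 - p e)) * ∏ e ∈ E₂ \ S₂, (1 - p e) := by
    rw [hsd, Finset.prod_union (hdisj.mono Finset.sdiff_subset Finset.sdiff_subset)]
  have hind := noNegCycle_union_iff hBC (fun e he => hBmem e (hS₁ he))
    (fun e he => hCmem e (hS₂ he)) σ
  rw [hw1, hw2]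
  by_cases hP : NoNegCycle (SimpleGraph.fromEdgeSet (↑S₁ : Set (Sym2 V))) σ <;>
    by_cases hQ : NoNegCycle (SimpleGraph.fromEdgeSet (↑S₂ : Set (Sym2 V))) σ <;>
      simp only [hind, hP, hQ, and_true, and_false, if_true, if_false, true_and, false_and] <;>
        ring

lemma Rbal_prod_aux [Fintype V] (σ : Sym2 V → Bool) (p : Sym2 V → ℝ) (v : V) :
    ∀ (k : ℕ) (G : SimpleGraph V) (A : Fin k → Set V),
      (∀ i j, i ≠ j → A i ∩ A j ⊆ {v}) →
      (∀ x y, G.Adj x y → ∃ i, x ∈ A i ∧ y ∈ A i) →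
      Rbal G σ p = ∏ i, Rbal (restrictTo G (A i)) σ p := by
  intro k
  induction k with
  | zero =>
    intro G A _ hedge
    rw [Finset.univ_eq_empty, Finset.prod_empty]
    exact Rbal_eq_one σ p fun x y h => by rcases hedge x y h with ⟨i, -⟩; exact i.elim0
  | succ k ih =>
    intro G A hpair hedge
    set C : Set V := ⋃ i : Fin k, A i.succ with hC
    have hsubC : ∀ i : Fin k, A i.succ ⊆ C := fun i =>
      Set.subset_iUnion (fun j : Fin k => A j.succ) i
    have hBC : A 0 ∩ C ⊆ {v} := by
      rintro x ⟨hx0, hxC⟩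
      rcases Set.mem_iUnion.mp hxC with ⟨i, hxi⟩
      exact hpair 0 i.succ (Fin.succ_ne_zero i).symm ⟨hx0, hxi⟩
    have hstep : Rbal G σ p = Rbal (restrictTo G (A 0)) σ p * Rbal (restrictTo G C) σ p := by
      apply Rbal_mul_of_split G σ p v _ _ hBC
      intro x y hxy
      rcases hedge x y hxy with ⟨j, hxj, hyj⟩
      rcases Fin.eq_zero_or_eq_succ j with rfl | ⟨i, rfl⟩
      · exact Or.inl ⟨hxj, hyj⟩
      · exact Or.inr ⟨hsubC i hxj, hsubC i hyj⟩
    rw [hstep, Fin.prod_univ_succ]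
    congr 1
    have hrestrict : ∀ i : Fin k,
        restrictTo (restrictTo G C) (A i.succ) = restrictTo G (A i.succ) := by
      intro i
      ext x y
      constructor
      · rintro ⟨⟨h, -⟩, hx, hy⟩; exact ⟨h, hx, hy⟩
      · rintro ⟨h, hx, hy⟩; exact ⟨⟨h, hsubC i hx, hsubC i hy⟩, hx, hy⟩
    have hedge' : ∀ x y, (restrictTo G C).Adj x y →
        ∃ i : Fin k, x ∈ A i.succ ∧ y ∈ A i.succ := by
      rintro x y ⟨hxy, hxC, hyC⟩
      rcases hedge x y hxy with ⟨j, hxj, hyj⟩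
      rcases Fin.eq_zero_or_eq_succ j with rfl | ⟨i, rfl⟩
      · have hx : x = v := hBC ⟨hxj, hxC⟩
        have hy : y = v := hBC ⟨hyj, hyC⟩
        exact absurd (hx.trans hy.symm) hxy.ne
      · exact ⟨i, hxj, hyj⟩
    rw [ih (restrictTo G C) (fun i => A i.succ)
      (fun i j hij => hpair i.succ j.succ (fun hh => hij (Fin.succ_injective k hh))) hedge']
    exact Finset.prod_congr rfl fun i _ => by rw [hrestrict i]

/-- Articulation point decomposition: if the vertex sets `A i` pairwise intersect
exactly in the articulation point `v`, cover all vertices, and every edge of `G`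
lies inside some `A i`, then the balance rate of `G` is the product of the balance
rates of the induced subgraphs. -/
theorem stmt3 [Fintype V] (G : SimpleGraph V) (σ : Sym2 V → Bool) (p : Sym2 V → ℝ)
    (hp0 : ∀ e, 0 ≤ p e) (hp1 : ∀ e, p e ≤ 1)
    (v : V) (k : ℕ) (A : Fin k → Set V)
    (hv : ∀ i, v ∈ A i)
    (hpair : ∀ i j, i ≠ j → A i ∩ A j = {v})
    (hcover : (⋃ i, A i) = Set.univ)
    (hedge : ∀ x y, G.Adj x y → ∃ i, x ∈ A i ∧ y ∈ A i) :
    Rbal G σ p = ∏ i, Rbal (restrictTo G (A i)) σ p :=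
  Rbal_prod_aux σ p v k G A (fun i j hij => (hpair i j hij).subset) hedge
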